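/- Let Ω be a Polish space with a Borel probability measure P, let T > 0 and 1 ≤ p < ∞. Suppose ψ : [0,1] × [0,T] × ℝ → ℝ is jointly measurable, x ↦ ψ(λ, t, x) is continuous for each fixed (λ, t), and there is a constant C > 0 with |ψ(λ, t, x)| ≤ C(1 + |x|) for all (λ, t, x). Let X : [0,1] → L^p(Ω; C([0,T]; ℝ)) be a measurable map (where C([0,T];ℝ) carries the supremum norm and L^p the Borel σ-algebra of its norm topology). Then for each λ ∈ [0,1] the function ω ↦ (t ↦ ∫_0^t ψ(λ, s, X(λ)(ω)(s)) ds) defines an element of L^p(Ω; C([0,T]; ℝ)), and the map λ ↦ [ω ↦ (t ↦ ∫_0^t ψ(λ, s, X(λ)(ω)(s)) ds)] ∈ L^p(Ω; C([0,T]; ℝ)) is measurable. -/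

import Mathlib

open MeasureTheory ENNReal

namespace MIAux

open Set Filter Topology TopologicalSpace

variable {T : ℝ}

/-- The integrand. -/
noncomputable def itg (hT : 0 < T) (ψ : Icc (0:ℝ) 1 → Icc (0:ℝ) T → ℝ → ℝ)
    (l : Icc (0:ℝ) 1) (g : C(Icc (0:ℝ) T, ℝ)) (s : ℝ) : ℝ :=
  ψ l (projIcc 0 T hT.le s) (g (projIcc 0 T hT.le s))

variable (hT : 0 < T) (ψ : Icc (0:ℝ) 1 → Icc (0:ℝ) T → ℝ → ℝ) {C : ℝ}

theorem itg_bound (hgrowth : ∀ l t x, |ψ l t x| ≤ C * (1 + |x|)) (hC : 0 ≤ C)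
    (l : Icc (0:ℝ) 1) (g : C(Icc (0:ℝ) T, ℝ)) (s : ℝ) :
    |itg hT ψ l g s| ≤ C * (1 + ‖g‖) := by
  refine (hgrowth _ _ _).trans ?_
  have h := g.norm_coe_le_norm (projIcc 0 T hT.le s)
  rw [Real.norm_eq_abs] at h
  nlinarith [abs_nonneg (g (projIcc 0 T hT.le s))]

theorem itg_meas
    (hψmeas : Measurable fun q : Icc (0:ℝ) 1 × Icc (0:ℝ) T × ℝ => ψ q.1 q.2.1 q.2.2)
    (l : Icc (0:ℝ) 1) (g : C(Icc (0:ℝ) T, ℝ)) :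
    Measurable (itg hT ψ l g) := by
  have h : Measurable fun s : ℝ => ((l, (projIcc 0 T hT.le s, g (projIcc 0 T hT.le s))) :
      Icc (0:ℝ) 1 × Icc (0:ℝ) T × ℝ) :=
    measurable_const.prodMk ((continuous_projIcc.measurable).prodMk
      (g.continuous.comp continuous_projIcc).measurable)
  exact hψmeas.comp h

theorem itg_meas_prod {A : Type*} [MeasurableSpace A]
    (hψmeas : Measurable fun q : Icc (0:ℝ) 1 × Icc (0:ℝ) T × ℝ => ψ q.1 q.2.1 q.2.2)
    {lmap : A → Icc (0:ℝ) 1} {gmap : A → C(Icc (0:ℝ) T, ℝ)}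
    (hl : Measurable lmap) (hg : StronglyMeasurable gmap) :
    StronglyMeasurable fun q : A × ℝ => itg hT ψ (lmap q.1) (gmap q.1) q.2 := by
  have hproj : StronglyMeasurable fun q : A × ℝ => projIcc 0 T hT.le q.2 :=
    (continuous_projIcc.stronglyMeasurable).comp_measurable measurable_snd
  have heval : StronglyMeasurable fun q : A × ℝ => (gmap q.1) (projIcc 0 T hT.le q.2) := by
    have hc : Continuous fun r : C(Icc (0:ℝ) T, ℝ) × Icc (0:ℝ) T => r.1 r.2 := continuous_eval
    exact hc.comp_stronglyMeasurable
      ((hg.comp_measurable measurable_fst).prodMk hproj)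
  have h : Measurable fun q : A × ℝ =>
      ((lmap q.1, (projIcc 0 T hT.le q.2, (gmap q.1) (projIcc 0 T hT.le q.2))) :
        Icc (0:ℝ) 1 × Icc (0:ℝ) T × ℝ) :=
    (hl.comp measurable_fst).prodMk (hproj.measurable.prodMk heval.measurable)
  exact (hψmeas.comp h).stronglyMeasurable

theorem itg_intervalIntegrable
    (hψmeas : Measurable fun q : Icc (0:ℝ) 1 × Icc (0:ℝ) T × ℝ => ψ q.1 q.2.1 q.2.2)
    (hgrowth : ∀ l t x, |ψ l t x| ≤ C * (1 + |x|)) (hC : 0 ≤ C)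
    (l : Icc (0:ℝ) 1) (g : C(Icc (0:ℝ) T, ℝ)) (a b : ℝ) :
    IntervalIntegrable (itg hT ψ l g) volume a b := by
  rw [intervalIntegrable_iff]
  refine Measure.integrableOn_of_bounded ?_ (itg_meas hT ψ hψmeas l g).aestronglyMeasurable
    (M := C * (1 + ‖g‖)) (ae_of_all _ fun s => ?_)
  · rw [Set.uIoc]; exact (measure_Ioc_lt_top).ne
  · rw [Real.norm_eq_abs]; exact itg_bound hT ψ hgrowth hC l g s

/-- The primitive, as a continuous map on `[0,T]`. -/
noncomputable def Fmap
    (hψmeas : Measurable fun q : Icc (0:ℝ) 1 × Icc (0:ℝ) T × ℝ => ψ q.1 q.2.1 q.2.2)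
    (hgrowth : ∀ l t x, |ψ l t x| ≤ C * (1 + |x|)) (hC : 0 ≤ C)
    (l : Icc (0:ℝ) 1) (g : C(Icc (0:ℝ) T, ℝ)) : C(Icc (0:ℝ) T, ℝ) :=
  ⟨fun t => ∫ s in (0:ℝ)..(t:ℝ), itg hT ψ l g s,
    (intervalIntegral.continuous_primitive
      (fun a b => itg_intervalIntegrable hT ψ hψmeas hgrowth hC l g a b) 0).comp
      continuous_subtype_val⟩

variable (hψmeas : Measurable fun q : Icc (0:ℝ) 1 × Icc (0:ℝ) T × ℝ => ψ q.1 q.2.1 q.2.2)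
  (hgrowth : ∀ l t x, |ψ l t x| ≤ C * (1 + |x|)) (hC : 0 ≤ C)

theorem Fmap_apply (l : Icc (0:ℝ) 1) (g : C(Icc (0:ℝ) T, ℝ)) (t : Icc (0:ℝ) T) :
    Fmap hT ψ hψmeas hgrowth hC l g t = ∫ s in (0:ℝ)..(t:ℝ), itg hT ψ l g s := rfl

theorem Fmap_norm_le (l : Icc (0:ℝ) 1) (g : C(Icc (0:ℝ) T, ℝ)) :
    ‖Fmap hT ψ hψmeas hgrowth hC l g‖ ≤ C * (1 + ‖g‖) * T := by
  have hb : (0:ℝ) ≤ C * (1 + ‖g‖) := by positivity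
  rw [ContinuousMap.norm_le _ (by nlinarith [hT.le])]
  intro t
  have h1 : ‖Fmap hT ψ hψmeas hgrowth hC l g t‖ ≤ C * (1 + ‖g‖) * |(t:ℝ) - 0| := by
    rw [Fmap_apply]
    exact intervalIntegral.norm_integral_le_of_norm_le_const fun s _ => by
      rw [Real.norm_eq_abs]; exact itg_bound hT ψ hgrowth hC l g s
  refine h1.trans ?_
  rw [sub_zero, abs_of_nonneg t.2.1]
  exact mul_le_mul_of_nonneg_left t.2.2 hb

theorem Fmap_continuous (hψcont : ∀ l t, Continuous fun x : ℝ => ψ l t x) (l : Icc (0:ℝ) 1) :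
    Continuous (Fmap hT ψ hψmeas hgrowth hC l) := by
  apply SeqContinuous.continuous
  intro u g hu
  obtain ⟨B, hB⟩ : ∃ B : ℝ, ∀ n, ‖u n‖ ≤ B := by
    obtain ⟨B, hB⟩ := hu.norm.bddAbove_range
    exact ⟨B, fun n => hB ⟨n, rfl⟩⟩
  have hInt : ∀ (h : C(Icc (0:ℝ) T, ℝ)) (a b : ℝ), IntervalIntegrable (itg hT ψ l h) volume a b :=
    fun h a b => itg_intervalIntegrable hT ψ hψmeas hgrowth hC l h a b
  have hIntD : ∀ (n : ℕ) (a b : ℝ),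
      IntervalIntegrable (fun s => |itg hT ψ l (u n) s - itg hT ψ l g s|) volume a b :=
    fun n a b => ((hInt (u n) a b).sub (hInt g a b)).abs
  have key : Tendsto (fun n => ∫ s in (0:ℝ)..T, |itg hT ψ l (u n) s - itg hT ψ l g s|)
      atTop (𝓝 (∫ s in (0:ℝ)..T, (0:ℝ))) := by
    refine intervalIntegral.tendsto_integral_filter_of_dominated_convergence
      (μ := volume) (a := 0) (b := T)
      (F := fun n s => |itg hT ψ l (u n) s - itg hT ψ l g s|)
      (f := fun _ => (0:ℝ))
      (fun _ => C * (1 + B) + C * (1 + ‖g‖)) ?_ ?_ ?_ ?_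
    · exact Eventually.of_forall fun n =>
        (((itg_meas hT ψ hψmeas l (u n)).sub (itg_meas hT ψ hψmeas l g)).abs).aestronglyMeasurable.restrict
    · refine Eventually.of_forall fun n => Eventually.of_forall fun s => fun _ => ?_
      rw [Real.norm_eq_abs, abs_abs]
      refine (abs_sub _ _).trans (add_le_add ?_ ?_)
      · exact (itg_bound hT ψ hgrowth hC l (u n) s).trans (by nlinarith [hB n])
      · exact itg_bound hT ψ hgrowth hC l g s
    · exact intervalIntegrable_const
    · refine Eventually.of_forall fun s => fun _ => ?_
      have h1 : Tendsto (fun n => (u n) (projIcc 0 T hT.le s)) atTop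
          (𝓝 (g (projIcc 0 T hT.le s))) :=
        ((continuous_eval_const (projIcc 0 T hT.le s)).tendsto g).comp hu
      have h2 := ((hψcont l (projIcc 0 T hT.le s)).tendsto _).comp h1
      have h3 := (h2.sub (tendsto_const_nhds
        (x := ψ l (projIcc 0 T hT.le s) (g (projIcc 0 T hT.le s))))).abs
      simpa [itg, sub_self] using h3
  have hDlim : Tendsto (fun n => ∫ s in (0:ℝ)..T, |itg hT ψ l (u n) s - itg hT ψ l g s|)
      atTop (𝓝 0) := by simpa using key
  rw [tendsto_iff_dist_tendsto_zero]
  refine squeeze_zero (fun n => dist_nonneg) (fun n => ?_) hDlim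
  have hDnonneg : 0 ≤ ∫ s in (0:ℝ)..T, |itg hT ψ l (u n) s - itg hT ψ l g s| :=
    intervalIntegral.integral_nonneg hT.le fun s _ => abs_nonneg _
  rw [Function.comp_apply, ContinuousMap.dist_le hDnonneg]
  intro t
  have hsub : Fmap hT ψ hψmeas hgrowth hC l (u n) t - Fmap hT ψ hψmeas hgrowth hC l g t
      = ∫ s in (0:ℝ)..(t:ℝ), (itg hT ψ l (u n) s - itg hT ψ l g s) := by
    rw [Fmap_apply, Fmap_apply, intervalIntegral.integral_sub (hInt (u n) 0 t) (hInt g 0 t)]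
  rw [Real.dist_eq, hsub]
  have step1 : |∫ s in (0:ℝ)..(t:ℝ), (itg hT ψ l (u n) s - itg hT ψ l g s)|
      ≤ ∫ s in (0:ℝ)..(t:ℝ), |itg hT ψ l (u n) s - itg hT ψ l g s| := by
    simpa [Real.norm_eq_abs] using
      intervalIntegral.norm_integral_le_integral_norm (μ := volume)
        (f := fun s => itg hT ψ l (u n) s - itg hT ψ l g s) t.2.1
  refine step1.trans ?_
  exact intervalIntegral.integral_mono_interval (le_refl (0:ℝ)) t.2.1 t.2.2
    (Eventually.of_forall fun s => abs_nonneg _) (hIntD n 0 T)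
/-- A function into a second–countable pseudometric space whose distances to all points are
measurable is Borel measurable. -/
theorem measurable_into_metric {α β : Type*} [MeasurableSpace α] [PseudoMetricSpace β]
    [SecondCountableTopology β] {f : α → β}
    (h : ∀ z : β, Measurable fun a => dist (f a) z) :
    @Measurable α β _ (borel β) f := by
  have hbasis : IsTopologicalBasis {s : Set β | ∃ z r, s = Metric.ball z r} := by
    apply isTopologicalBasis_of_isOpen_of_nhds
    · rintro s ⟨z, r, rfl⟩; exact Metric.isOpen_ball
    · intro x u hxu hu
      obtain ⟨ε, hε, hball⟩ := Metric.isOpen_iff.1 hu x hxu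
      exact ⟨Metric.ball x ε, ⟨x, ε, rfl⟩, Metric.mem_ball_self hε, hball⟩
  rw [hbasis.borel_eq_generateFrom]
  apply measurable_generateFrom
  rintro s ⟨z, r, rfl⟩
  have : f ⁻¹' Metric.ball z r = {a | dist (f a) z < r} := rfl
  rw [this]
  exact measurableSet_lt (h z) measurable_const

/-- The `nnnorm` of a continuous function on `[0,T]` is the supremum over a dense set. -/
theorem nnnorm_eq_iSup_dense (hT : 0 < T) {D : Set (Icc (0:ℝ) T)} (hD : Dense D)
    (h : C(Icc (0:ℝ) T, ℝ)) :
    (‖h‖₊ : ℝ≥0∞) = ⨆ d : D, (‖h d.1‖₊ : ℝ≥0∞) := by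
  haveI : Nonempty (Icc (0:ℝ) T) := ⟨⟨0, le_refl 0, hT.le⟩⟩
  refine le_antisymm ?_ (iSup_le fun d => ENNReal.coe_le_coe.2
    (by simpa [← NNReal.coe_le_coe] using h.norm_coe_le_norm d.1))
  obtain ⟨t₀, -, ht₀⟩ := isCompact_univ.exists_isMaxOn univ_nonempty
    ((continuous_norm.comp h.continuous).continuousOn)
  have hnorm : ‖h‖₊ ≤ ‖h t₀‖₊ := by
    rw [← NNReal.coe_le_coe, coe_nnnorm, coe_nnnorm]
    exact (ContinuousMap.norm_le _ (norm_nonneg _)).2 fun t => ht₀ (mem_univ t)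
  obtain ⟨dseq, hdseq_mem, hdseq_lim⟩ := mem_closure_iff_seq_limit.1 (hD t₀)
  have hev : Tendsto (fun n => (‖h (dseq n)‖₊ : ℝ≥0∞)) atTop (𝓝 (‖h t₀‖₊ : ℝ≥0∞)) := by
    have h1 : Tendsto (fun n => h (dseq n)) atTop (𝓝 (h t₀)) :=
      (h.continuous.tendsto t₀).comp hdseq_lim
    exact (ENNReal.continuous_coe.tendsto _).comp ((continuous_nnnorm.tendsto _).comp h1)
  calc (‖h‖₊ : ℝ≥0∞) ≤ (‖h t₀‖₊ : ℝ≥0∞) := ENNReal.coe_le_coe.2 hnorm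
    _ ≤ ⨆ d : D, (‖h d.1‖₊ : ℝ≥0∞) :=
      le_of_tendsto hev (Eventually.of_forall fun n =>
        le_iSup_of_le ⟨dseq n, hdseq_mem n⟩ le_rfl)

section Measure

variable {Ω : Type*} [MeasurableSpace Ω] {P : Measure Ω} [IsProbabilityMeasure P] {p : ℝ≥0∞}

theorem Fmap_memℒp (hψcont : ∀ l t, Continuous fun x : ℝ => ψ l t x)
    (l : Icc (0:ℝ) 1) {f : Ω → C(Icc (0:ℝ) T, ℝ)} (hf : MemLp f p P) :
    MemLp (fun ω => Fmap hT ψ hψmeas hgrowth hC l (f ω)) p P := by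
  have haesm : AEStronglyMeasurable (fun ω => Fmap hT ψ hψmeas hgrowth hC l (f ω)) P :=
    (Fmap_continuous hT ψ hψmeas hgrowth hC hψcont l).comp_aestronglyMeasurable
      hf.aestronglyMeasurable
  refine MemLp.of_le (g := fun ω => C * T + C * T * ‖f ω‖) ?_ haesm
    (Eventually.of_forall fun ω => ?_)
  · exact (memLp_const (C * T)).add (hf.norm.const_mul (C * T))
  · refine (Fmap_norm_le hT ψ hψmeas hgrowth hC l (f ω)).trans ?_
    have : C * (1 + ‖f ω‖) * T = C * T + C * T * ‖f ω‖ := by ring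
    rw [this]
    exact le_abs_self _

theorem measurable_eLpNorm_aux [Fact (1 ≤ p)] (hp2 : p ≠ ∞)
    (Y Z : Lp C(Icc (0:ℝ) T, ℝ) p P) :
    Measurable fun l : Icc (0:ℝ) 1 =>
      eLpNorm (fun ω => Fmap hT ψ hψmeas hgrowth hC l (Y ω) - Z ω) p P := by
  have hp0 : p ≠ 0 := (lt_of_lt_of_le zero_lt_one Fact.out).ne'
  obtain ⟨D, hDc, hDd⟩ := TopologicalSpace.exists_countable_dense (Icc (0:ℝ) T)
  haveI : Countable ↥D := hDc.to_subtype
  simp_rw [eLpNorm_eq_lintegral_rpow_enorm_toReal hp0 hp2]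
  have hbase : Measurable fun q : Icc (0:ℝ) 1 × Ω =>
      (‖Fmap hT ψ hψmeas hgrowth hC q.1 (Y q.2) - Z q.2‖₊ : ℝ≥0∞) := by
    simp_rw [nnnorm_eq_iSup_dense hT hDd]
    refine Measurable.iSup fun d => ?_
    have hm1 : StronglyMeasurable fun q : Icc (0:ℝ) 1 × Ω =>
        ∫ s in Ioc (0:ℝ) (d.1 : ℝ), itg hT ψ q.1 (Y q.2) s := by
      exact StronglyMeasurable.integral_prod_right'
        (itg_meas_prod hT ψ hψmeas (lmap := Prod.fst) (gmap := fun q => Y q.2)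
          measurable_fst ((Lp.stronglyMeasurable Y).comp_measurable measurable_snd))
    have hm1' : StronglyMeasurable fun q : Icc (0:ℝ) 1 × Ω =>
        Fmap hT ψ hψmeas hgrowth hC q.1 (Y q.2) d.1 := by
      have : ∀ q : Icc (0:ℝ) 1 × Ω, Fmap hT ψ hψmeas hgrowth hC q.1 (Y q.2) d.1
          = ∫ s in Ioc (0:ℝ) (d.1 : ℝ), itg hT ψ q.1 (Y q.2) s := fun q => by
        rw [Fmap_apply, intervalIntegral.integral_of_le d.1.2.1]
      simpa [this] using hm1
    have hm2 : Measurable fun q : Icc (0:ℝ) 1 × Ω => Z q.2 d.1 :=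
      (((continuous_eval_const d.1).comp_stronglyMeasurable
        (Lp.stronglyMeasurable Z)).measurable).comp measurable_snd
    have : Measurable fun q : Icc (0:ℝ) 1 × Ω =>
        Fmap hT ψ hψmeas hgrowth hC q.1 (Y q.2) d.1 - Z q.2 d.1 :=
      hm1'.measurable.sub hm2
    simpa [ContinuousMap.sub_apply] using this.nnnorm.coe_nnreal_ennreal
  have hbase' : Measurable fun q : Icc (0:ℝ) 1 × Ω =>
      (‖Fmap hT ψ hψmeas hgrowth hC q.1 (Y q.2) - Z q.2‖₊ : ℝ≥0∞) ^ p.toReal :=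
    (ENNReal.continuous_rpow_const.measurable).comp hbase
  have hin : Measurable fun l : Icc (0:ℝ) 1 =>
      ∫⁻ ω, (‖Fmap hT ψ hψmeas hgrowth hC l (Y ω) - Z ω‖₊ : ℝ≥0∞) ^ p.toReal ∂P :=
    Measurable.lintegral_prod_right' hbase'
  exact (ENNReal.continuous_rpow_const.measurable).comp hin

theorem measurable_fixed [Fact (1 ≤ p)] (hp2 : p ≠ ∞)
    [SecondCountableTopology (Lp C(Icc (0:ℝ) T, ℝ) p P)]
    (hψcont : ∀ l t, Continuous fun x : ℝ => ψ l t x)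
    (Y : Lp C(Icc (0:ℝ) T, ℝ) p P) :
    @Measurable (Icc (0:ℝ) 1) (Lp C(Icc (0:ℝ) T, ℝ) p P) _ (borel _)
      (fun l => ((Fmap_memℒp hT ψ hψmeas hgrowth hC hψcont l (Lp.memLp Y)).toLp
        (fun ω => Fmap hT ψ hψmeas hgrowth hC l (Y ω)))) := by
  apply measurable_into_metric
  intro Z
  have heq : (fun l : Icc (0:ℝ) 1 =>
        dist ((Fmap_memℒp hT ψ hψmeas hgrowth hC hψcont l (Lp.memLp Y)).toLp
          (fun ω => Fmap hT ψ hψmeas hgrowth hC l (Y ω))) Z)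
      = fun l => (eLpNorm (fun ω => Fmap hT ψ hψmeas hgrowth hC l (Y ω) - Z ω) p P).toReal := by
    funext l
    rw [Lp.dist_def]
    congr 1
    apply eLpNorm_congr_ae
    filter_upwards [MemLp.coeFn_toLp
      (Fmap_memℒp hT ψ hψmeas hgrowth hC hψcont l (Lp.memLp Y))] with ω hω
    simp [hω]
  rw [heq]
  exact ENNReal.measurable_toReal.comp
    (measurable_eLpNorm_aux hT ψ hψmeas hgrowth hC hp2 Y Z)

end Measure

/-- Composing a "Carathéodory-in-the-first-variable" function with a simple function. -/
theorem measurable_comp_simpleFunc {α β γ : Type*} [MeasurableSpace α] [MeasurableSpace γ]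
    {f : α → β → γ} (hf : ∀ y : β, Measurable fun a => f a y) (S : SimpleFunc α β) :
    Measurable fun a => f a (S a) := by
  intro u hu
  have hset : (fun a => f a (S a)) ⁻¹' u = ⋃ y ∈ S.range, ((⇑S) ⁻¹' {y} ∩ {a | f a y ∈ u}) := by
    ext a
    simp only [mem_preimage, mem_iUnion, mem_inter_iff, mem_setOf_eq, SimpleFunc.mem_range,
      mem_singleton_iff, exists_prop]
    constructor
    · intro h; exact ⟨S a, ⟨a, rfl⟩, rfl, h⟩
    · rintro ⟨y, -, rfl, h⟩; exact h
  rw [hset]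
  exact S.range.measurableSet_biUnion fun y _ =>
    (S.measurableSet_fiber y).inter (hf y hu)

section UnifInt

variable {Ω : Type*} [MeasurableSpace Ω] {P : Measure Ω} {p : ℝ≥0∞}

theorem unifIntegrable_of_norm_le {ι : Type*} {β γ : Type*} [NormedAddCommGroup β]
    [NormedAddCommGroup γ] {f : ι → Ω → β} {g : ι → Ω → γ}
    (hf : UnifIntegrable f p P) (h : ∀ i x, ‖g i x‖ ≤ ‖f i x‖) :
    UnifIntegrable g p P := by
  intro ε hε
  obtain ⟨δ, hδ, H⟩ := hf hε
  refine ⟨δ, hδ, fun i s hs hμs => le_trans (eLpNorm_mono fun x => ?_) (H i s hs hμs)⟩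
  by_cases hx : x ∈ s
  · simp only [Set.indicator_of_mem hx]; exact h i x
  · simp [Set.indicator_of_notMem hx]

theorem unifIntegrable_const_mul {ι : Type*} {f : ι → Ω → ℝ}
    (hf : UnifIntegrable f p P) (c : ℝ) :
    UnifIntegrable (fun i x => c * f i x) p P := by
  intro ε hε
  have hε' : 0 < ε / (|c| + 1) := div_pos hε (by positivity)
  obtain ⟨δ, hδ, H⟩ := hf hε'
  refine ⟨δ, hδ, fun i s hs hμs => ?_⟩
  have hind : s.indicator (fun x => c * f i x) = fun x => c • s.indicator (f i) x := by
    funext x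
    by_cases hx : x ∈ s <;>
      simp [Set.indicator_of_mem, Set.indicator_of_notMem, hx, smul_eq_mul]
  rw [hind]
  have := eLpNorm_const_smul (c := c) (f := s.indicator (f i)) (p := p) (μ := P)
  rw [show (c • s.indicator (f i) : Ω → ℝ) = fun x => c • s.indicator (f i) x from rfl] at this
  rw [this]
  calc (‖c‖₊ : ℝ≥0∞) * eLpNorm (s.indicator (f i)) p P
      ≤ ENNReal.ofReal |c| * ENNReal.ofReal (ε / (|c| + 1)) := by
        rw [← Real.enorm_eq_ofReal_abs]
        exact mul_le_mul_right (H i s hs hμs) _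
    _ = ENNReal.ofReal (|c| * (ε / (|c| + 1))) := (ENNReal.ofReal_mul (abs_nonneg c)).symm
    _ ≤ ENNReal.ofReal ε := by
        apply ENNReal.ofReal_le_ofReal
        rw [mul_div_assoc'] 
        rw [div_le_iff₀ (by positivity : (0:ℝ) < |c| + 1)]
        nlinarith [abs_nonneg c, hε.le]

end UnifInt

end MIAux


open MIAux

/-- Let `Ω` be Polish with a Borel probability measure `P`, `T > 0`,
`1 ≤ p < ∞`. Suppose `ψ : [0,1] × [0,T] × ℝ → ℝ` is jointly measurable, continuous in
the last variable, and of uniform linear growth. Then for any Borel-measurable map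
`X : [0,1] → L^p(Ω; C([0,T];ℝ))`, for each `λ` the function
`ω ↦ (t ↦ ∫_0^t ψ(λ, s, X(λ)(ω)(s)) ds)` defines an element of
`L^p(Ω; C([0,T];ℝ))`, and the resulting map `[0,1] → L^p(Ω; C([0,T];ℝ))` is
measurable. -/
theorem measurable_integral_comp_Lp
    {Ω : Type*} [TopologicalSpace Ω] [PolishSpace Ω] [MeasurableSpace Ω] [BorelSpace Ω]
    (P : Measure Ω) [IsProbabilityMeasure P]
    {T : ℝ} (hT : 0 < T)
    {p : ℝ≥0∞} [Fact (1 ≤ p)] (hp2 : p ≠ ⊤)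
    (ψ : Set.Icc (0:ℝ) 1 → Set.Icc (0:ℝ) T → ℝ → ℝ)
    (hψmeas : Measurable fun q : Set.Icc (0:ℝ) 1 × Set.Icc (0:ℝ) T × ℝ =>
      ψ q.1 q.2.1 q.2.2)
    (hψcont : ∀ (l : Set.Icc (0:ℝ) 1) (t : Set.Icc (0:ℝ) T),
      Continuous fun x : ℝ => ψ l t x)
    (C : ℝ) (hC : 0 < C)
    (hgrowth : ∀ (l : Set.Icc (0:ℝ) 1) (t : Set.Icc (0:ℝ) T) (x : ℝ),
      |ψ l t x| ≤ C * (1 + |x|))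
    (X : Set.Icc (0:ℝ) 1 → Lp C(Set.Icc (0:ℝ) T, ℝ) p P)
    (hX : @Measurable (Set.Icc (0:ℝ) 1) (Lp C(Set.Icc (0:ℝ) T, ℝ) p P) _
      (borel (Lp C(Set.Icc (0:ℝ) T, ℝ) p P)) X) :
    ∃ (hcont : ∀ (l : Set.Icc (0:ℝ) 1) (ω : Ω),
        Continuous fun t : Set.Icc (0:ℝ) T =>
          ∫ s in (0:ℝ)..(t:ℝ),
            ψ l (Set.projIcc 0 T hT.le s) (X l ω (Set.projIcc 0 T hT.le s)))
      (hmem : ∀ l : Set.Icc (0:ℝ) 1,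
        MemLp (fun ω : Ω => ContinuousMap.mk
          (fun t : Set.Icc (0:ℝ) T =>
            ∫ s in (0:ℝ)..(t:ℝ),
              ψ l (Set.projIcc 0 T hT.le s) (X l ω (Set.projIcc 0 T hT.le s)))
          (hcont l ω)) p P),
      @Measurable (Set.Icc (0:ℝ) 1) (Lp C(Set.Icc (0:ℝ) T, ℝ) p P) _
        (borel (Lp C(Set.Icc (0:ℝ) T, ℝ) p P))
        (fun l : Set.Icc (0:ℝ) 1 => (hmem l).toLp
          (fun ω : Ω => ContinuousMap.mk
            (fun t : Set.Icc (0:ℝ) T =>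
              ∫ s in (0:ℝ)..(t:ℝ),
                ψ l (Set.projIcc 0 T hT.le s) (X l ω (Set.projIcc 0 T hT.le s)))
            (hcont l ω))) := by
  classical
  haveI : Fact (p ≠ ∞) := ⟨hp2⟩
  have hp1 : (1:ℝ≥0∞) ≤ p := Fact.out
  have hp0 : p ≠ 0 := (lt_of_lt_of_le zero_lt_one hp1).ne'
  have hC' : (0:ℝ) ≤ C := hC.le
  refine ⟨fun l ω => (Fmap hT ψ hψmeas hgrowth hC' l (X l ω)).continuous,
    fun l => Fmap_memℒp hT ψ hψmeas hgrowth hC' hψcont l (Lp.memLp (X l)), ?_⟩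
  letI mLp : MeasurableSpace (Lp C(Set.Icc (0:ℝ) T, ℝ) p P) :=
    borel (Lp C(Set.Icc (0:ℝ) T, ℝ) p P)
  haveI : BorelSpace (Lp C(Set.Icc (0:ℝ) T, ℝ) p P) := ⟨rfl⟩
  have hXsm : StronglyMeasurable X := hX.stronglyMeasurable
  set S : ℕ → SimpleFunc (Set.Icc (0:ℝ) 1) (Lp C(Set.Icc (0:ℝ) T, ℝ) p P) := hXsm.approx
    with hSdef
  -- the Carathéodory map
  set G : Set.Icc (0:ℝ) 1 → Lp C(Set.Icc (0:ℝ) T, ℝ) p P → Lp C(Set.Icc (0:ℝ) T, ℝ) p P :=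
    fun l Y => (Fmap_memℒp hT ψ hψmeas hgrowth hC' hψcont l (Lp.memLp Y)).toLp
      (fun ω => Fmap hT ψ hψmeas hgrowth hC' l (Y ω)) with hGdef
  have hGfix : ∀ Y, Measurable fun l => G l Y := fun Y =>
    measurable_fixed hT ψ hψmeas hgrowth hC' hp2 hψcont Y
  have hn : ∀ n, Measurable fun l => G l (S n l) := fun n =>
    measurable_comp_simpleFunc hGfix (S n)
  have hlim : ∀ l, Filter.Tendsto (fun n => G l (S n l)) Filter.atTop (nhds (G l (X l))) := by
    intro l
    have hSl : Filter.Tendsto (fun n => S n l) Filter.atTop (nhds (X l)) :=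
      hXsm.tendsto_approx l
    have hY : Filter.Tendsto (fun n => eLpNorm (⇑(S n l) - ⇑(X l)) p P) Filter.atTop (nhds 0) :=
      (Lp.tendsto_Lp_iff_tendsto_eLpNorm' _ _).1 hSl
    have haesm : ∀ n : ℕ,
        AEStronglyMeasurable (fun ω => Fmap hT ψ hψmeas hgrowth hC' l (S n l ω)) P := fun n =>
      (Fmap_memℒp hT ψ hψmeas hgrowth hC' hψcont l (Lp.memLp (S n l))).aestronglyMeasurable
    have hYm : TendstoInMeasure P (fun n => ⇑(S n l)) Filter.atTop ⇑(X l) :=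
      tendstoInMeasure_of_tendsto_eLpNorm hp0
        (fun n => Lp.aestronglyMeasurable _) (Lp.aestronglyMeasurable _) hY
    -- convergence in measure of the composed functions
    have hFm : TendstoInMeasure P (fun n ω => Fmap hT ψ hψmeas hgrowth hC' l (S n l ω))
        Filter.atTop (fun ω => Fmap hT ψ hψmeas hgrowth hC' l (X l ω)) := by
      intro ε hε
      refine Filter.tendsto_of_subseq_tendsto fun ns hns => ?_
      have h1 : TendstoInMeasure P (fun k => ⇑(S (ns k) l)) Filter.atTop ⇑(X l) :=
        fun δ hδ => (hYm δ hδ).comp hns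
      obtain ⟨ms, -, hms⟩ := h1.exists_seq_tendsto_ae
      have h2 : ∀ᵐ ω ∂P, Filter.Tendsto
          (fun k => Fmap hT ψ hψmeas hgrowth hC' l (S (ns (ms k)) l ω)) Filter.atTop
          (nhds (Fmap hT ψ hψmeas hgrowth hC' l (X l ω))) :=
        hms.mono fun ω hω =>
          ((Fmap_continuous hT ψ hψmeas hgrowth hC' hψcont l).tendsto _).comp hω
      have h3 := tendstoInMeasure_of_tendsto_ae (fun k => haesm (ns (ms k))) h2
      exact ⟨ms, h3 ε hε⟩
    -- uniform integrability of the composed functions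
    have hui0 : UnifIntegrable (fun n => ⇑(S n l)) p P :=
      unifIntegrable_of_tendsto_Lp hp1 hp2 (fun n => Lp.memLp _) (Lp.memLp _) hY
    have huin : UnifIntegrable (fun n ω => ‖S n l ω‖) p P :=
      unifIntegrable_of_norm_le hui0 (fun i x => by simp)
    have huih : UnifIntegrable
        ((fun (_ : ℕ) (_ : Ω) => C * T) + fun n ω => C * T * ‖S n l ω‖) p P := by
      refine UnifIntegrable.add ?_ ?_ hp1 (fun n => aestronglyMeasurable_const)
        (fun n => (Lp.aestronglyMeasurable (S n l)).norm.const_mul _)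
      · exact unifIntegrable_const hp1 hp2 (memLp_const _)
      · exact unifIntegrable_const_mul huin (C * T)
    have hui : UnifIntegrable (fun n ω => Fmap hT ψ hψmeas hgrowth hC' l (S n l ω)) p P := by
      refine unifIntegrable_of_norm_le huih fun n ω => ?_
      have h1 := Fmap_norm_le hT ψ hψmeas hgrowth hC' l (S n l ω)
      have h2 : C * (1 + ‖S n l ω‖) * T = C * T + C * T * ‖S n l ω‖ := by ring
      refine h1.trans ?_
      rw [h2]
      simp only [Pi.add_apply]
      exact le_abs_self _
    -- Vitali convergence
    have hVit : Filter.Tendsto (fun n => eLpNorm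
        ((fun ω => Fmap hT ψ hψmeas hgrowth hC' l (S n l ω)) -
          fun ω => Fmap hT ψ hψmeas hgrowth hC' l (X l ω)) p P) Filter.atTop (nhds 0) :=
      tendsto_Lp_finite_of_tendstoInMeasure hp1 hp2 haesm
        (Fmap_memℒp hT ψ hψmeas hgrowth hC' hψcont l (Lp.memLp (X l))) hui hFm
    exact (Lp.tendsto_Lp_iff_tendsto_eLpNorm''
      (fun n ω => Fmap hT ψ hψmeas hgrowth hC' l (S n l ω))
      (fun n => Fmap_memℒp hT ψ hψmeas hgrowth hC' hψcont l (Lp.memLp (S n l)))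
      (fun ω => Fmap hT ψ hψmeas hgrowth hC' l (X l ω))
      (Fmap_memℒp hT ψ hψmeas hgrowth hC' hψcont l (Lp.memLp (X l)))).2 hVit
  exact measurable_of_tendsto_metrizable' Filter.atTop hn
    (tendsto_pi_nhds.2 hlim)
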